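/- Let r ≥ 2 be an integer, a ∈ {0,1}, p1, p2 ∈ (0,1), p = p1/(p1+p2). Let N' be negative binomial counting Bernoulli(p) trials until r+a successes and N'' (independent of N' given nothing further) negative binomial counting Bernoulli(p) trials until r-a failures. Suppose conditional on (N', N''), a random variable D satisfies E[D | N',N''] = 2(N'' p2 - N' p1)/(p1+p2) + 4a and Var[D | N',N''] = 2(N'+N'')(p1+p2-2 p1 p2)/(p1+p2)^2. Then Var[D] = 2((r+a)/p1 + (r-a)/p2). -/

import Mathlib

open MeasureTheory ProbabilityTheory

set_option maxHeartbeats 2000000 in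
/-- Law-of-total-variance computation for the difference `D = N1 - N2` of the numbers of
samples taken from the two populations.  Here `N'` and `N''` are the (independent) negative
binomial sample counts of the two IBS processes run on the Bernoulli(`p`) sequence,
`p = p1/(p1+p2)`, with the stated means and variances, and `D` has the stated conditional
mean and conditional variance given `(N', N'')`.  Then
`Var[D] = 2((r+a)/p1 + (r-a)/p2)`. -/
theorem stmt12 {Ω : Type*} [m0 : MeasurableSpace Ω] (μ : Measure Ω) [IsProbabilityMeasure μ]
    (r : ℕ) (hr : 2 ≤ r) (a : ℝ) (ha : a = 0 ∨ a = 1)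
    (p1 p2 : ℝ) (hp1 : p1 ∈ Set.Ioo (0:ℝ) 1) (hp2 : p2 ∈ Set.Ioo (0:ℝ) 1)
    (N' N'' D : Ω → ℝ)
    (hN' : MemLp N' 2 μ) (hN'' : MemLp N'' 2 μ) (hD : MemLp D 2 μ)
    (hEN' : μ[N'] = ((r : ℝ) + a) * (p1 + p2) / p1)
    (hVN' : variance N' μ =
      ((r : ℝ) + a) * (1 - p1 / (p1 + p2)) / (p1 / (p1 + p2)) ^ 2)
    (hEN'' : μ[N''] = ((r : ℝ) - a) * (p1 + p2) / p2)
    (hVN'' : variance N'' μ =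
      ((r : ℝ) - a) * (p1 / (p1 + p2)) / (1 - p1 / (p1 + p2)) ^ 2)
    (hind : IndepFun N' N'' μ)
    (hm : MeasurableSpace.comap (fun ω => (N' ω, N'' ω)) inferInstance ≤ m0)
    (hED : μ[D | MeasurableSpace.comap (fun ω => (N' ω, N'' ω)) inferInstance]
        =ᵐ[μ] fun ω => 2 * (N'' ω * p2 - N' ω * p1) / (p1 + p2) + 4 * a)
    (hVD : μ[(fun ω => (D ω) ^ 2) |
          MeasurableSpace.comap (fun ω => (N' ω, N'' ω)) inferInstance]
        =ᵐ[μ] fun ω =>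
          2 * (N' ω + N'' ω) * (p1 + p2 - 2 * p1 * p2) / (p1 + p2) ^ 2 +
            (2 * (N'' ω * p2 - N' ω * p1) / (p1 + p2) + 4 * a) ^ 2) :
    variance D μ = 2 * (((r : ℝ) + a) / p1 + ((r : ℝ) - a) / p2) := by
  obtain ⟨hp1pos, hp1lt⟩ := hp1
  obtain ⟨hp2pos, hp2lt⟩ := hp2
  have hcpos : (0:ℝ) < p1 + p2 := by linarith
  have hcne : (p1 + p2) ≠ 0 := hcpos.ne'
  have hp1ne : p1 ≠ 0 := hp1pos.ne'
  have hp2ne : p2 ≠ 0 := hp2pos.ne'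
  -- integrability
  have iN' : Integrable N' μ := hN'.integrable one_le_two
  have iN'' : Integrable N'' μ := hN''.integrable one_le_two
  have iN'2 : Integrable (fun ω => (N' ω) ^ 2) μ := hN'.integrable_sq
  have iN''2 : Integrable (fun ω => (N'' ω) ^ 2) μ := hN''.integrable_sq
  have iMul : Integrable (fun ω => N' ω * N'' ω) μ := hind.integrable_mul iN' iN''
  have hMul : ∫ ω, N' ω * N'' ω ∂μ = (∫ ω, N' ω ∂μ) * ∫ ω, N'' ω ∂μ :=
    hind.integral_mul_eq_mul_integral iN'.aestronglyMeasurable iN''.aestronglyMeasurable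
  -- a generic linear-combination integral computation
  have key : ∀ α β γ δ ε ζ : ℝ,
      ∫ ω, (α * N' ω + β * N'' ω + γ * (N' ω * N'' ω)
        + δ * (N' ω) ^ 2 + ε * (N'' ω) ^ 2 + ζ) ∂μ
      = α * (∫ ω, N' ω ∂μ) + β * (∫ ω, N'' ω ∂μ)
        + γ * ((∫ ω, N' ω ∂μ) * ∫ ω, N'' ω ∂μ)
        + δ * (∫ ω, (N' ω) ^ 2 ∂μ) + ε * (∫ ω, (N'' ω) ^ 2 ∂μ) + ζ := by
    intro α β γ δ ε ζ
    have i1 : Integrable (fun ω => α * N' ω) μ := iN'.const_mul α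
    have i2 : Integrable (fun ω => β * N'' ω) μ := iN''.const_mul β
    have i3 : Integrable (fun ω => γ * (N' ω * N'' ω)) μ := iMul.const_mul γ
    have i4 : Integrable (fun ω => δ * (N' ω) ^ 2) μ := iN'2.const_mul δ
    have i5 : Integrable (fun ω => ε * (N'' ω) ^ 2) μ := iN''2.const_mul ε
    have i12 : Integrable (fun ω => α * N' ω + β * N'' ω) μ := i1.add i2
    have i123 : Integrable (fun ω => α * N' ω + β * N'' ω + γ * (N' ω * N'' ω)) μ :=
      i12.add i3
    have i1234 : Integrable (fun ω => α * N' ω + β * N'' ω + γ * (N' ω * N'' ω)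
        + δ * (N' ω) ^ 2) μ := i123.add i4
    have i12345 : Integrable (fun ω => α * N' ω + β * N'' ω + γ * (N' ω * N'' ω)
        + δ * (N' ω) ^ 2 + ε * (N'' ω) ^ 2) μ := i1234.add i5
    rw [integral_add i12345 (integrable_const ζ), integral_add i1234 i5,
      integral_add i123 i4, integral_add i12 i3, integral_add i1 i2,
      integral_const_mul, integral_const_mul, integral_const_mul,
      integral_const_mul, integral_const_mul, integral_const, hMul]
    simp
  -- second-moment identities
  have hM2' : ∫ ω, (N' ω) ^ 2 ∂μ = variance N' μ + (∫ ω, N' ω ∂μ) ^ 2 := by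
    have h := variance_eq_sub hN'
    simp only [Pi.pow_apply] at h
    rw [h]; ring
  have hM2'' : ∫ ω, (N'' ω) ^ 2 ∂μ = variance N'' μ + (∫ ω, N'' ω ∂μ) ^ 2 := by
    have h := variance_eq_sub hN''
    simp only [Pi.pow_apply] at h
    rw [h]; ring
  -- E[D]
  have hED0 : μ[D] = 0 := by
    have h1 : μ[D] = ∫ ω, (2 * (N'' ω * p2 - N' ω * p1) / (p1 + p2) + 4 * a) ∂μ := by
      rw [← integral_condExp hm (f := D)]
      exact integral_congr_ae hED
    have h2 : (fun ω => 2 * (N'' ω * p2 - N' ω * p1) / (p1 + p2) + 4 * a)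
        = fun ω => (-(2 * p1 / (p1 + p2))) * N' ω + (2 * p2 / (p1 + p2)) * N'' ω
          + 0 * (N' ω * N'' ω) + 0 * (N' ω) ^ 2 + 0 * (N'' ω) ^ 2 + 4 * a := by
      funext ω; field_simp; ring
    rw [h1, h2, key, hEN', hEN'']
    field_simp
    ring
  -- E[D^2]
  have hED2 : ∫ ω, (D ω) ^ 2 ∂μ
      = ∫ ω, ((2 * (p1 + p2 - 2 * p1 * p2) / (p1 + p2) ^ 2
            - 16 * a * p1 / (p1 + p2)) * N' ω
          + (2 * (p1 + p2 - 2 * p1 * p2) / (p1 + p2) ^ 2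
            + 16 * a * p2 / (p1 + p2)) * N'' ω
          + (-(8 * p1 * p2 / (p1 + p2) ^ 2)) * (N' ω * N'' ω)
          + (4 * p1 ^ 2 / (p1 + p2) ^ 2) * (N' ω) ^ 2
          + (4 * p2 ^ 2 / (p1 + p2) ^ 2) * (N'' ω) ^ 2 + 16 * a ^ 2) ∂μ := by
    have h := integral_condExp (μ := μ) hm (f := fun ω => (D ω) ^ 2)
    simp only at h
    have heq : (fun ω => 2 * (N' ω + N'' ω) * (p1 + p2 - 2 * p1 * p2) / (p1 + p2) ^ 2 +
          (2 * (N'' ω * p2 - N' ω * p1) / (p1 + p2) + 4 * a) ^ 2)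
        = fun ω => (2 * (p1 + p2 - 2 * p1 * p2) / (p1 + p2) ^ 2
            - 16 * a * p1 / (p1 + p2)) * N' ω
          + (2 * (p1 + p2 - 2 * p1 * p2) / (p1 + p2) ^ 2
            + 16 * a * p2 / (p1 + p2)) * N'' ω
          + (-(8 * p1 * p2 / (p1 + p2) ^ 2)) * (N' ω * N'' ω)
          + (4 * p1 ^ 2 / (p1 + p2) ^ 2) * (N' ω) ^ 2
          + (4 * p2 ^ 2 / (p1 + p2) ^ 2) * (N'' ω) ^ 2 + 16 * a ^ 2 := by
      funext ω; field_simp; ring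
    rw [← h, ← heq]
    exact integral_congr_ae hVD
  rw [variance_eq_sub hD, hED0]
  simp only [Pi.pow_apply]
  rw [hED2, key, hM2', hM2'', hEN', hEN'', hVN', hVN'']
  have h1mp : 1 - p1 / (p1 + p2) = p2 / (p1 + p2) := by field_simp; ring
  rw [h1mp]
  field_simp
  ring
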